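/- Let m ≥ 1 and let f : ℝ^m → (0,∞) be a continuous function with ε := inf_θ f(θ) > 0, and suppose there exist c₁, κ, R > 0 with f(θ) ≥ c₁|θ|^κ whenever |θ| ≥ R and c₁ R^κ ≥ 2ε. Then for every α < −m/κ the function f^α is Lebesgue integrable on ℝ^m with ∫_{ℝ^m} f^α dθ > 0, and for every μ ∈ (0,2), lim_{α→−∞} ( ∫_{{θ : f(θ) ≥ (1+μ)ε}} f(θ)^α dθ ) / ( ∫_{ℝ^m} f(θ)^α dθ ) = 0; that is, the probability measures with densities proportional to f^α concentrate on the sublevel sets {f < (1+μ)ε} as α → −∞. -/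

import Mathlib

open MeasureTheory Filter Metric Set
open scoped Topology ENNReal

noncomputable section

set_option maxHeartbeats 2000000 in
/-- **Concentration of ML-noise invariant distributions in the underparametrized regime.**
Let `f > 0` be continuous with infimum `ε > 0`, growing like `c₁|θ|^κ` at infinity with
`c₁ R^κ ≥ 2ε`. Then for every `α < -m/κ` the density `f^α` is integrable with positive
total mass, and for every `μ ∈ (0,2)` the normalized measures concentrate on
`{f < (1+μ)ε}` as `α → -∞`: `(∫_{f ≥ (1+μ)ε} f^α) / (∫ f^α) → 0`. -/
theorem ml_invariant_distributions_concentrate_underparametrized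
    (m : ℕ) (hm : 1 ≤ m)
    (f : EuclideanSpace ℝ (Fin m) → ℝ) (hfpos : ∀ θ, 0 < f θ) (hfc : Continuous f)
    (ε : ℝ) (hε : 0 < ε) (hεinf : IsGLB (Set.range f) ε)
    (c₁ κ R : ℝ) (hc₁ : 0 < c₁) (hκ : 0 < κ) (hR : 0 < R)
    (hgrow : ∀ θ : EuclideanSpace ℝ (Fin m), R ≤ ‖θ‖ → c₁ * ‖θ‖ ^ κ ≤ f θ)
    (hR2 : 2 * ε ≤ c₁ * R ^ κ) :
    (∀ α : ℝ, α < -(m : ℝ) / κ →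
      Integrable (fun θ => f θ ^ α) ∧ 0 < ∫ θ, f θ ^ α) ∧
    ∀ μ ∈ Set.Ioo (0 : ℝ) 2,
      Tendsto (fun α : ℝ =>
          (∫ θ in {θ | (1 + μ) * ε ≤ f θ}, f θ ^ α) / ∫ θ, f θ ^ α)
        atBot (𝓝 0) := by
  have hm0 : (0 : ℝ) < (m : ℝ) := by exact_mod_cast Nat.lt_of_lt_of_le Nat.zero_lt_one hm
  have hcrit : -(m : ℝ) / κ < 0 := div_neg_of_neg_of_pos (by linarith) hκ
  -- global integrability for `α < -m/κ`
  have key : ∀ α : ℝ, α < -(m : ℝ) / κ → Integrable (fun θ => f θ ^ α) := by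
    intro α hα
    have hαneg : α < 0 := hα.trans hcrit
    have hκα : κ * α < -(m : ℝ) := by
      have := (lt_div_iff₀ hκ).mp hα
      linarith [this]
    have hκα0 : κ * α ≤ 0 := mul_nonpos_of_nonneg_of_nonpos hκ.le hαneg.le
    have hcont : Continuous fun θ => f θ ^ α :=
      hfc.rpow_const fun θ => Or.inl (hfpos θ).ne'
    rw [← integrableOn_univ, ← Set.union_compl_self (closedBall (0 : EuclideanSpace ℝ (Fin m)) R)]
    refine IntegrableOn.union ?_ ?_
    · exact hcont.continuousOn.integrableOn_compact (isCompact_closedBall _ _)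
    · -- tail bound via `(1+‖θ‖)^(κα)`
      have hint : Integrable
          (fun θ : EuclideanSpace ℝ (Fin m) => (1 + ‖θ‖) ^ (κ * α)) := by
        have h1 : ((Module.finrank ℝ (EuclideanSpace ℝ (Fin m)) : ℝ)) < -(κ * α) := by
          rw [finrank_euclideanSpace_fin]; linarith
        simpa using integrable_one_add_norm (μ := volume) h1
      have hg : Integrable (fun θ : EuclideanSpace ℝ (Fin m) =>
          (c₁ ^ α * (R / (1 + R)) ^ (κ * α)) * (1 + ‖θ‖) ^ (κ * α)) := hint.const_mul _
      refine (hg.restrict).mono' (hcont.aestronglyMeasurable.restrict) ?_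
      rw [ae_restrict_iff' measurableSet_closedBall.compl]
      filter_upwards with θ hθ
      simp only [Set.mem_compl_iff, mem_closedBall_zero_iff, not_le] at hθ
      have hθR : R ≤ ‖θ‖ := hθ.le
      have hθ0 : 0 < ‖θ‖ := hR.trans hθ
      have hb : 0 < c₁ * ‖θ‖ ^ κ := mul_pos hc₁ (Real.rpow_pos_of_pos hθ0 κ)
      have hle : (R / (1 + R)) * (1 + ‖θ‖) ≤ ‖θ‖ := by
        rw [div_mul_eq_mul_div, div_le_iff₀ (by linarith)]
        nlinarith
      have hbase : 0 < (R / (1 + R)) * (1 + ‖θ‖) := by positivity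
      calc ‖f θ ^ α‖ = f θ ^ α := Real.norm_of_nonneg (Real.rpow_nonneg (hfpos θ).le α)
        _ ≤ (c₁ * ‖θ‖ ^ κ) ^ α :=
            Real.rpow_le_rpow_of_nonpos hb (hgrow θ hθR) hαneg.le
        _ = c₁ ^ α * ‖θ‖ ^ (κ * α) := by
            rw [Real.mul_rpow hc₁.le (Real.rpow_nonneg (norm_nonneg θ) κ),
              ← Real.rpow_mul (norm_nonneg θ)]
        _ ≤ c₁ ^ α * (((R / (1 + R)) * (1 + ‖θ‖)) ^ (κ * α)) := by
            refine mul_le_mul_of_nonneg_left ?_ (Real.rpow_nonneg hc₁.le α)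
            exact Real.rpow_le_rpow_of_nonpos hbase hle hκα0
        _ = (c₁ ^ α * (R / (1 + R)) ^ (κ * α)) * (1 + ‖θ‖) ^ (κ * α) := by
            rw [Real.mul_rpow (by positivity) (by positivity)]; ring
  -- positivity of the total mass
  have hpos : ∀ α : ℝ, Integrable (fun θ => f θ ^ α) → 0 < ∫ θ, f θ ^ α := by
    intro α hi
    rw [integral_pos_iff_support_of_nonneg (fun θ => Real.rpow_nonneg (hfpos θ).le α) hi]
    have hsupp : Function.support (fun θ => f θ ^ α) = Set.univ := by
      ext θ
      simp [Function.mem_support, (Real.rpow_pos_of_pos (hfpos θ) α).ne']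
    rw [hsupp]
    exact isOpen_univ.measure_pos volume univ_nonempty
  refine ⟨fun α hα => ⟨key α hα, hpos α (key α hα)⟩, ?_⟩
  -- concentration
  rintro μ ⟨hμ0, hμ2⟩
  have hlb : ∀ θ, ε ≤ f θ := fun θ => hεinf.1 (mem_range_self θ)
  set β : ℝ := 1 + μ / 2 with hβdef
  have hβ1 : 1 < β := by simp [hβdef]; linarith
  have hβ2 : β < 2 := by simp [hβdef]; linarith
  have hβμ : β < 1 + μ := by simp [hβdef]; linarith
  have hβε : 0 < β * ε := by nlinarith
  -- a small ball on which `f < β ε`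
  obtain ⟨y, hymem, -, hy⟩ := hεinf.exists_between (by nlinarith : ε < β * ε)
  obtain ⟨θ₀, rfl⟩ := hymem
  obtain ⟨r, hr0, hrball⟩ := Metric.isOpen_iff.mp
    (isOpen_lt hfc continuous_const : IsOpen {θ | f θ < β * ε}) θ₀ hy
  set α₀ : ℝ := -(m : ℝ) / κ - 1 with hα₀def
  have hα₀ : α₀ < -(m : ℝ) / κ := by simp [hα₀def]
  have hi₀ : Integrable fun θ => f θ ^ α₀ := key α₀ hα₀
  set C : ℝ := ∫ θ, f θ ^ α₀ with hCdef
  have hC0 : 0 ≤ C := integral_nonneg fun θ => Real.rpow_nonneg (hfpos θ).le α₀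
  set B₀ : Set (EuclideanSpace ℝ (Fin m)) := closedBall 0 R with hB₀def
  set V : ℝ := (volume B₀).toReal with hVdef
  set v : ℝ := (volume (ball θ₀ r)).toReal with hvdef
  have hv0 : 0 < v :=
    ENNReal.toReal_pos (measure_ball_pos volume θ₀ hr0).ne' measure_ball_lt_top.ne
  have hV0 : 0 ≤ V := ENNReal.toReal_nonneg
  have h2ε : (0 : ℝ) < 2 * ε := by linarith
  set S : Set (EuclideanSpace ℝ (Fin m)) := {θ | (1 + μ) * ε ≤ f θ} with hSdef
  have hS : MeasurableSet S := (isClosed_le continuous_const hfc).measurableSet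
  -- the dominating function
  set G : ℝ → ℝ := fun α =>
    ((1 + μ) / β) ^ α * (V / v) + (2 / β) ^ α * ((2 * ε) ^ (-α₀) * C / v) with hGdef
  have hGlim : Tendsto G atBot (𝓝 0) := by
    have h1 := (tendsto_rpow_atBot_of_base_gt_one ((1 + μ) / β)
      ((one_lt_div (by linarith)).mpr hβμ)).mul_const (V / v)
    have h2 := (tendsto_rpow_atBot_of_base_gt_one (2 / β)
      ((one_lt_div (by linarith)).mpr hβ2)).mul_const ((2 * ε) ^ (-α₀) * C / v)
    simpa using h1.add h2
  -- the main bound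
  have hmain : ∀ α : ℝ, α ≤ α₀ →
      (∫ θ in S, f θ ^ α) / (∫ θ, f θ ^ α) ≤ G α := by
    intro α hαle
    have hα : α < -(m : ℝ) / κ := lt_of_le_of_lt hαle hα₀
    have hαneg : α < 0 := hα.trans hcrit
    have hi : Integrable fun θ => f θ ^ α := key α hα
    have hnonneg : ∀ θ, 0 ≤ f θ ^ α := fun θ => Real.rpow_nonneg (hfpos θ).le α
    have hD : 0 < ∫ θ, f θ ^ α := hpos α hi
    -- denominator lower bound
    have hden : (β * ε) ^ α * v ≤ ∫ θ, f θ ^ α := by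
      refine le_trans ?_ (setIntegral_le_integral (s := ball θ₀ r) hi (ae_of_all _ hnonneg))
      refine setIntegral_ge_of_const_le_real measurableSet_ball measure_ball_lt_top.ne
        (fun θ hθ => ?_) hi.integrableOn
      exact Real.rpow_le_rpow_of_nonpos (hfpos θ) (le_of_lt (hrball hθ)) hαneg.le
    have hdpos : 0 < (β * ε) ^ α * v := mul_pos (Real.rpow_pos_of_pos hβε α) hv0
    -- numerator upper bound
    have hnum : (∫ θ in S, f θ ^ α) ≤ ((1 + μ) * ε) ^ α * V + (2 * ε) ^ (α - α₀) * C := by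
      have hsplit : (∫ θ in S, f θ ^ α)
          = (∫ θ in S ∩ B₀, f θ ^ α) + ∫ θ in S \ B₀, f θ ^ α := by
        have h := setIntegral_union (f := fun θ => f θ ^ α) (μ := volume)
          (disjoint_sdiff_self_right.mono_left (inter_subset_right (s := S) (t := B₀)))
          (hS.diff measurableSet_closedBall) hi.integrableOn hi.integrableOn
        rwa [Set.inter_union_diff] at h
      rw [hsplit]
      have hpart1 : (∫ θ in S ∩ B₀, f θ ^ α) ≤ ((1 + μ) * ε) ^ α * V := by
        have hμε : (0 : ℝ) < (1 + μ) * ε := by nlinarith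
        have hb : ∀ θ ∈ S ∩ B₀, ‖f θ ^ α‖ ≤ ((1 + μ) * ε) ^ α := by
          intro θ hθ
          rw [Real.norm_of_nonneg (hnonneg θ)]
          exact Real.rpow_le_rpow_of_nonpos hμε hθ.1 hαneg.le
        have hfin : volume (S ∩ B₀) < ∞ :=
          lt_of_le_of_lt (measure_mono inter_subset_right) measure_closedBall_lt_top
        calc (∫ θ in S ∩ B₀, f θ ^ α) ≤ ‖∫ θ in S ∩ B₀, f θ ^ α‖ := le_abs_self _
          _ ≤ ((1 + μ) * ε) ^ α * (volume (S ∩ B₀)).toReal :=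
              norm_setIntegral_le_of_norm_le_const hfin hb
          _ ≤ ((1 + μ) * ε) ^ α * V := by
              refine mul_le_mul_of_nonneg_left ?_ (Real.rpow_nonneg hμε.le α)
              exact ENNReal.toReal_mono measure_closedBall_lt_top.ne
                (measure_mono inter_subset_right)
      have hpart2 : (∫ θ in S \ B₀, f θ ^ α) ≤ (2 * ε) ^ (α - α₀) * C := by
        have hsub : (∫ θ in S \ B₀, f θ ^ α) ≤ ∫ θ in B₀ᶜ, f θ ^ α := by
          refine setIntegral_mono_set hi.integrableOn (ae_of_all _ hnonneg) ?_
          exact HasSubset.Subset.eventuallyLE fun θ hθ => hθ.2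
        refine hsub.trans ?_
        have hptwise : ∀ θ ∈ B₀ᶜ, f θ ^ α ≤ (2 * ε) ^ (α - α₀) * f θ ^ α₀ := by
          intro θ hθ
          simp only [hB₀def, Set.mem_compl_iff, mem_closedBall_zero_iff, not_le] at hθ
          have h2f : 2 * ε ≤ f θ := by
            refine hR2.trans (le_trans ?_ (hgrow θ hθ.le))
            exact mul_le_mul_of_nonneg_left
              (Real.rpow_le_rpow hR.le hθ.le hκ.le) hc₁.le
          have : f θ ^ α = f θ ^ (α - α₀) * f θ ^ α₀ := by
            rw [← Real.rpow_add (hfpos θ)]; ring_nf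
          rw [this]
          exact mul_le_mul_of_nonneg_right
            (Real.rpow_le_rpow_of_nonpos h2ε h2f (by linarith))
            (Real.rpow_nonneg (hfpos θ).le α₀)
        calc (∫ θ in B₀ᶜ, f θ ^ α)
            ≤ ∫ θ in B₀ᶜ, (2 * ε) ^ (α - α₀) * f θ ^ α₀ := by
              refine setIntegral_mono_on hi.integrableOn
                ((hi₀.const_mul _).integrableOn) measurableSet_closedBall.compl hptwise
          _ = (2 * ε) ^ (α - α₀) * ∫ θ in B₀ᶜ, f θ ^ α₀ := integral_const_mul _ _
          _ ≤ (2 * ε) ^ (α - α₀) * C := by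
              refine mul_le_mul_of_nonneg_left ?_ (Real.rpow_nonneg h2ε.le _)
              exact setIntegral_le_integral hi₀
                (ae_of_all _ fun θ => Real.rpow_nonneg (hfpos θ).le α₀)
      linarith
    -- combine
    have hnum0 : 0 ≤ ∫ θ in S, f θ ^ α := integral_nonneg hnonneg
    have step1 : (∫ θ in S, f θ ^ α) / (∫ θ, f θ ^ α)
        ≤ (((1 + μ) * ε) ^ α * V + (2 * ε) ^ (α - α₀) * C) / ((β * ε) ^ α * v) := by
      have hbnd0 : 0 ≤ ((1 + μ) * ε) ^ α * V + (2 * ε) ^ (α - α₀) * C :=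
        add_nonneg (mul_nonneg (Real.rpow_nonneg (by nlinarith) α) hV0)
          (mul_nonneg (Real.rpow_nonneg h2ε.le _) hC0)
      exact div_le_div₀ hbnd0 hnum hdpos hden
    refine step1.trans_eq ?_
    -- algebraic identity
    have hβ0 : β ≠ 0 := by positivity
    have e1 : ((1 + μ) * ε) ^ α = ((1 + μ) / β) ^ α * (β * ε) ^ α := by
      rw [← Real.mul_rpow (by positivity) hβε.le]
      congr 1
      field_simp
    have e2 : (2 * ε) ^ (α - α₀) = (2 / β) ^ α * (β * ε) ^ α * (2 * ε) ^ (-α₀) := by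
      rw [show α - α₀ = α + -α₀ by ring, Real.rpow_add h2ε]
      congr 1
      rw [← Real.mul_rpow (by positivity) hβε.le]
      congr 1
      field_simp
    have hne : (β * ε) ^ α ≠ 0 := (Real.rpow_pos_of_pos hβε α).ne'
    rw [e1, e2]
    show _ = ((1 + μ) / β) ^ α * (V / v) + (2 / β) ^ α * ((2 * ε) ^ (-α₀) * C / v)
    have hrw : ((1 + μ) / β) ^ α * (β * ε) ^ α * V
        + (2 / β) ^ α * (β * ε) ^ α * (2 * ε) ^ (-α₀) * C
        = (β * ε) ^ α * (((1 + μ) / β) ^ α * V + (2 / β) ^ α * ((2 * ε) ^ (-α₀) * C)) := by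
      ring
    rw [hrw, mul_div_mul_left _ _ hne, add_div, mul_div_assoc, mul_div_assoc]
  -- squeeze
  refine squeeze_zero' ?_ ?_ hGlim
  · filter_upwards [eventually_le_atBot α₀] with α hαle
    have hα : α < -(m : ℝ) / κ := lt_of_le_of_lt hαle hα₀
    exact div_nonneg (integral_nonneg fun θ => Real.rpow_nonneg (hfpos θ).le α)
      (hpos α (key α hα)).le
  · filter_upwards [eventually_le_atBot α₀] with α hαle
    exact hmain α hαle

end
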